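/- Ginsburg–Sands theorem for T₁ spaces: every infinite T₁ topological space has either a countably infinite subset whose subspace topology is discrete, or a countably infinite subset whose subspace topology is the cofinite topology; equivalently, it has an infinite subspace homeomorphic to ℕ with the discrete topology or to ℕ with the cofinite topology. -/

import Mathlib

open Set

/-- A sequence with separating open sets gives a discrete subspace. -/
lemma aux_discrete_of_seq {X : Type*} [TopologicalSpace X] (y : ℕ → X) (W : ℕ → Set X)
    (hinj : Function.Injective y) (hopen : ∀ n, IsOpen (W n)) (hmem : ∀ n, y n ∈ W n)
    (hsep : ∀ m n, m ≠ n → y m ∉ W n) :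
    DiscreteTopology (Set.range y) := by
  rw [discreteTopology_iff_isOpen_singleton]
  rintro ⟨x, hx⟩
  obtain ⟨n, rfl⟩ := hx
  have hset : ({(⟨y n, mem_range_self n⟩ : Set.range y)} : Set (Set.range y))
      = Subtype.val ⁻¹' (W n) := by
    ext ⟨z, hz⟩
    obtain ⟨m, rfl⟩ := hz
    simp only [Set.mem_singleton_iff, Set.mem_preimage, Subtype.mk.injEq]
    constructor
    · intro h
      rw [hinj (Subtype.mk.inj h)]
      exact hmem n
    · intro h
      by_contra hne
      exact hsep m n (fun e => hne (by rw [e])) h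
  rw [hset]
  exact (hopen n).preimage continuous_subtype_val

lemma aux_claim {X : Type*} [TopologicalSpace X] [T1Space X]
    (h : ∀ Y : Set X, Y.Countable → Y.Infinite → ¬ DiscreteTopology Y)
    (S : Set X) (hS : S.Infinite) :
    ∃ x ∈ S, ∃ T ⊆ S, T.Infinite ∧ ∀ V : Set X, IsOpen V → x ∈ V → (T \ V).Finite := by
  by_contra hc
  push_neg at hc
  -- hc : ∀ x ∈ S, ∀ T ⊆ S, T.Infinite → ∃ V, IsOpen V ∧ x ∈ V ∧ (T \ V).Infinite
  have key : ∀ T : Set X, T ⊆ S → T.Infinite →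
      ∃ y, y ∈ T ∧ ∃ V : Set X, IsOpen V ∧ y ∈ V ∧ (T \ V).Infinite := by
    intro T hTS hTinf
    obtain ⟨y, hy⟩ := hTinf.nonempty
    obtain ⟨V, hV1, hV2, hV3⟩ := hc y (hTS hy) T hTS hTinf
    exact ⟨y, hy, V, hV1, hV2, hV3⟩
  let A := {T : Set X // T ⊆ S ∧ T.Infinite}
  let pickY : A → X := fun T => (key T.1 T.2.1 T.2.2).choose
  have specY : ∀ T : A, pickY T ∈ T.1 := fun T => (key T.1 T.2.1 T.2.2).choose_spec.1
  let pickV : A → Set X := fun T => (key T.1 T.2.1 T.2.2).choose_spec.2.choose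
  have specV : ∀ T : A, IsOpen (pickV T) ∧ pickY T ∈ pickV T ∧ (T.1 \ pickV T).Infinite :=
    fun T => (key T.1 T.2.1 T.2.2).choose_spec.2.choose_spec
  let next : A → A := fun T => ⟨T.1 \ pickV T, (diff_subset).trans T.2.1, (specV T).2.2⟩
  let seq : ℕ → A := fun n => next^[n] ⟨S, subset_rfl, hS⟩
  have hseq_succ : ∀ n, (seq (n+1)).1 = (seq n).1 \ pickV (seq n) := by
    intro n
    simp only [seq, Function.iterate_succ_apply']
    rfl
  have hmono : ∀ m n, n ≤ m → (seq m).1 ⊆ (seq n).1 := by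
    intro m n hnm
    induction m with
    | zero => simp_all
    | succ k ih =>
      rcases Nat.lt_or_ge n (k+1) with hlt | hge
      · exact (hseq_succ k ▸ diff_subset).trans (ih (Nat.lt_succ_iff.mp hlt))
      · have : n = k + 1 := le_antisymm hnm hge
        subst this; exact subset_rfl
  set y : ℕ → X := fun n => pickY (seq n) with hy
  set V : ℕ → Set X := fun n => pickV (seq n) with hV
  have hyV : ∀ n, y n ∈ V n := fun n => (specV (seq n)).2.1
  have hymem : ∀ n, y n ∈ (seq n).1 := fun n => specY (seq n)
  have hnotV : ∀ m n, n < m → y m ∉ V n := by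
    intro m n hnm
    have : y m ∈ (seq (n+1)).1 := hmono m (n+1) hnm (hymem m)
    rw [hseq_succ n] at this
    exact this.2
  have hne : ∀ m n, m ≠ n → y m ≠ y n := by
    intro m n hmn
    rcases Nat.lt_or_ge m n with hlt | hge
    · intro e; exact hnotV n m hlt (e ▸ hyV m)
    · have hlt : n < m := lt_of_le_of_ne hge (Ne.symm hmn)
      intro e; exact hnotV m n hlt (e ▸ hyV n)
  have hinj : Function.Injective y := fun m n e => by
    by_contra hmn; exact hne m n hmn e
  let W : ℕ → Set X := fun n => V n \ (y '' {m | m < n})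
  have hWopen : ∀ n, IsOpen (W n) :=
    fun n => (specV (seq n)).1.sdiff (((finite_Iio n).image y).isClosed)
  have hWmem : ∀ n, y n ∈ W n := by
    intro n
    refine ⟨hyV n, ?_⟩
    rintro ⟨m, hm, e⟩
    exact hne m n (Nat.ne_of_lt hm) e
  have hWsep : ∀ m n, m ≠ n → y m ∉ W n := by
    intro m n hmn hmem
    rcases Nat.lt_or_ge m n with hlt | hge
    · exact hmem.2 ⟨m, hlt, rfl⟩
    · exact hnotV m n (lt_of_le_of_ne hge (Ne.symm hmn)) hmem.1
  exact h (Set.range y) (countable_range y) (infinite_range_of_injective hinj)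
    (aux_discrete_of_seq y W hinj hWopen hWmem hWsep)


/-- **Ginsburg–Sands theorem for T₁ spaces**: every infinite T₁ topological space has a
countably infinite subset whose subspace topology is discrete, or a countably infinite
subset whose subspace topology is the cofinite topology (the open subsets of `Y` are
exactly `∅` and the sets with finite complement in `Y`). -/
theorem ginsburg_sands_T1 {X : Type*} [TopologicalSpace X] [T1Space X] [Infinite X] :
    ∃ Y : Set X, Y.Countable ∧ Y.Infinite ∧
      (DiscreteTopology Y ∨ ∀ V : Set Y, IsOpen V ↔ V = ∅ ∨ Vᶜ.Finite) := by
  by_cases hd : ∃ Y : Set X, Y.Countable ∧ Y.Infinite ∧ DiscreteTopology Y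
  · obtain ⟨Y, h1, h2, h3⟩ := hd
    exact ⟨Y, h1, h2, Or.inl h3⟩
  push_neg at hd
  have h : ∀ Y : Set X, Y.Countable → Y.Infinite → ¬ DiscreteTopology Y := by
    intro Y h1 h2 h3
    exact (hd Y h1 h2) h3
  have claim : ∀ S : Set X, S.Infinite →
      ∃ x ∈ S, ∃ T ⊆ S, x ∈ T ∧ T.Infinite ∧
        ∀ V : Set X, IsOpen V → x ∈ V → (T \ V).Finite := by
    intro S hS
    obtain ⟨x, hxS, T, hTS, hTinf, hconv⟩ := aux_claim h S hS
    refine ⟨x, hxS, insert x T, insert_subset hxS hTS, mem_insert x T,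
      hTinf.mono (subset_insert x T), ?_⟩
    intro V hV hxV
    have : insert x T \ V ⊆ T \ V := by
      rintro z ⟨hz1, hz2⟩
      rcases hz1 with rfl | hz1
      · exact absurd hxV hz2
      · exact ⟨hz1, hz2⟩
    exact (hconv V hV hxV).subset this
  -- state: a point, an infinite set containing it, converging to it
  let B := {p : X × Set X // p.1 ∈ p.2 ∧ p.2.Infinite ∧
      ∀ V : Set X, IsOpen V → p.1 ∈ V → (p.2 \ V).Finite}
  have step : ∀ p : B, ∃ q : B, q.1.2 ⊆ p.1.2 \ {p.1.1} := by
    rintro ⟨⟨x, T⟩, hxT, hTinf, hconv⟩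
    have hinf' : (T \ {x}).Infinite := hTinf.diff (finite_singleton x)
    obtain ⟨x', _, T', hT'sub, hx'T', hT'inf, hT'conv⟩ := claim (T \ {x}) hinf'
    exact ⟨⟨⟨x', T'⟩, hx'T', hT'inf, hT'conv⟩, hT'sub⟩
  let next : B → B := fun p => (step p).choose
  have hnext : ∀ p : B, (next p).1.2 ⊆ p.1.2 \ {p.1.1} := fun p => (step p).choose_spec
  obtain ⟨x0, hx0, T0, _, hx0T0, hT0inf, hT0conv⟩ := claim univ infinite_univ
  let p0 : B := ⟨⟨x0, T0⟩, hx0T0, hT0inf, hT0conv⟩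
  let seq : ℕ → B := fun n => next^[n] p0
  set x : ℕ → X := fun n => (seq n).1.1 with hx
  set S : ℕ → Set X := fun n => (seq n).1.2 with hSdef
  have hsucc : ∀ n, S (n+1) ⊆ S n \ {x n} := by
    intro n
    have : seq (n+1) = next (seq n) := Function.iterate_succ_apply' next n p0
    rw [hSdef]
    simp only [this]
    exact hnext (seq n)
  have hmono : ∀ m n, n ≤ m → S m ⊆ S n := by
    intro m n hnm
    induction m with
    | zero => simp_all
    | succ k ih =>
      rcases Nat.lt_or_ge n (k+1) with hlt | hge
      · exact ((hsucc k).trans diff_subset).trans (ih (Nat.lt_succ_iff.mp hlt))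
      · have : n = k + 1 := le_antisymm hnm hge
        subst this; exact subset_rfl
  have hxmem : ∀ n, x n ∈ S n := fun n => (seq n).2.1
  have hxinf : ∀ n, (S n).Infinite := fun n => (seq n).2.2.1
  have hconv : ∀ n, ∀ V : Set X, IsOpen V → x n ∈ V → (S n \ V).Finite :=
    fun n => (seq n).2.2.2
  have hne : ∀ m n, n < m → x m ≠ x n := by
    intro m n hnm e
    have : x m ∈ S (n+1) := hmono m (n+1) hnm (hxmem m)
    exact (hsucc n this).2 (by rw [e]; rfl)
  have hinj : Function.Injective x := by
    intro m n e
    by_contra hmn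
    rcases Nat.lt_or_ge m n with hlt | hge
    · exact hne n m hlt e.symm
    · exact hne m n (lt_of_le_of_ne hge (Ne.symm hmn)) e
  refine ⟨Set.range x, countable_range x, infinite_range_of_injective hinj, Or.inr ?_⟩
  intro V
  constructor
  · intro hV
    rcases eq_or_ne V ∅ with rfl | hVne
    · exact Or.inl rfl
    right
    obtain ⟨U, hUopen, hUV⟩ := isOpen_induced_iff.mp hV
    obtain ⟨⟨z, hz⟩, hzV⟩ := nonempty_iff_ne_empty.mpr hVne
    obtain ⟨n, rfl⟩ := hz
    have hxnU : x n ∈ U := by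
      have := hUV ▸ hzV
      exact this
    -- (range x \ U) is finite
    have hfin : (Set.range x \ U).Finite := by
      have hsub : Set.range x \ U ⊆ (x '' {m | m < n}) ∪ (S n \ U) := by
        rintro z ⟨⟨m, rfl⟩, hzU⟩
        rcases Nat.lt_or_ge m n with hlt | hge
        · exact Or.inl ⟨m, hlt, rfl⟩
        · exact Or.inr ⟨hmono m n hge (hxmem m), hzU⟩
      exact (((finite_Iio n).image x).union (hconv n U hUopen hxnU)).subset hsub
    have : Vᶜ ⊆ Subtype.val ⁻¹' (Set.range x \ U) := by
      intro z hzc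
      refine ⟨z.2, ?_⟩
      rw [← hUV] at hzc
      exact hzc
    exact (hfin.preimage (Subtype.val_injective.injOn)).subset this
  · rintro (rfl | hfin)
    · exact isOpen_empty
    · rw [← compl_compl V]
      exact hfin.isClosed.isOpen_compl
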